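/- arXiv:2409.03572 — 5 statements merged into one kernel-verified Lean document; each statement's English description precedes it below -/
import Mathlib

section
/- Let M be a nonempty closed subset of ℝ^N and Q a Borel probability measure on ℝ^N with finite second moment. Then the extrinsic mean set of Q, i.e., the set of minimizers over M of the Fréchet function F(x) = ∫ ‖x − y‖² dQ(y), is nonempty. -/
open MeasureTheory
open scoped RealInnerProductSpace

/-- For a nonempty closed subset `M ⊆ ℝ^N` and a Borel probability
measure `Q` on `ℝ^N` with finite second moment, the set of minimizers over `M` of the
Fréchet function `F x = ∫ ‖x - y‖² ∂Q` (the extrinsic mean set) is nonempty. -/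
theorem extrinsic_mean_set_nonempty
    {N : ℕ}
    (M : Set (EuclideanSpace ℝ (Fin N))) (hM : M.Nonempty) (hMc : IsClosed M)
    (Q : Measure (EuclideanSpace ℝ (Fin N))) [IsProbabilityMeasure Q]
    (h2 : Integrable (fun y => ‖y‖ ^ 2) Q) :
    ∃ p ∈ M, ∀ q ∈ M, (∫ y, ‖p - y‖ ^ 2 ∂Q) ≤ ∫ y, ‖q - y‖ ^ 2 ∂Q := by
  set m : EuclideanSpace ℝ (Fin N) := ∫ y, y ∂Q with hm
  have hQy : Integrable (fun y : EuclideanSpace ℝ (Fin N) => y) Q := by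
    refine Integrable.mono' ((integrable_const (1:ℝ)).add h2)
      aestronglyMeasurable_id ?_
    filter_upwards with y
    simpa using by nlinarith [sq_nonneg (‖y‖ - 1), norm_nonneg y]
  have hI2 : Integrable (fun y : EuclideanSpace ℝ (Fin N) => ‖m - y‖ ^ 2) Q := by
    refine Integrable.mono' ((integrable_const (2 * ‖m‖ ^ 2)).add (h2.const_mul 2))
      ?_ ?_
    · exact ((continuous_const.sub continuous_id).norm.pow 2).aestronglyMeasurable
    · filter_upwards with y
      simp only [Pi.add_apply]
      have h1 : ‖m - y‖ ≤ ‖m‖ + ‖y‖ := norm_sub_le m y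
      have := norm_nonneg (m - y)
      rw [Real.norm_of_nonneg (by positivity)]
      nlinarith [mul_le_mul h1 h1 this (by positivity), sq_nonneg (‖m‖ - ‖y‖)]
  have hIin : ∀ x : EuclideanSpace ℝ (Fin N),
      Integrable (fun y => ⟪x - m, m - y⟫) Q := by
    intro x
    have : Integrable (fun y : EuclideanSpace ℝ (Fin N) =>
        ⟪x - m, m⟫ - ⟪x - m, y⟫) Q :=
      (integrable_const _).sub (hQy.const_inner (x - m))
    simpa [inner_sub_right] using this
  have key : ∀ x : EuclideanSpace ℝ (Fin N),
      (∫ y, ‖x - y‖ ^ 2 ∂Q) = ‖x - m‖ ^ 2 + ∫ y, ‖m - y‖ ^ 2 ∂Q := by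
    intro x
    have hre : (fun y : EuclideanSpace ℝ (Fin N) => ‖x - y‖ ^ 2)
        = fun y => ‖x - m‖ ^ 2 + (2 * ⟪x - m, m - y⟫ + ‖m - y‖ ^ 2) := by
      funext y
      have : x - y = (x - m) + (m - y) := by abel
      rw [this, norm_add_sq_real]
      ring
    rw [hre]
    have hg1 : Integrable (fun y => 2 * ⟪x - m, m - y⟫) Q := (hIin x).const_mul 2
    have hg : Integrable (fun y => 2 * ⟪x - m, m - y⟫ + ‖m - y‖ ^ 2) Q := hg1.add hI2
    rw [integral_add (integrable_const _) hg,
      integral_add hg1 hI2, integral_const_mul,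
      integral_inner (show Integrable (fun y : EuclideanSpace ℝ (Fin N) => m - y) Q
        from (integrable_const m).sub hQy),
      integral_sub (integrable_const m) hQy, integral_const]
    simp [hm]
  obtain ⟨p, hpM, hp⟩ := hMc.exists_infDist_eq_dist hM m
  refine ⟨p, hpM, fun q hqM => ?_⟩
  have hle : ‖p - m‖ ≤ ‖q - m‖ := by
    have h1 : dist m p ≤ dist m q := hp ▸ Metric.infDist_le_dist_of_mem hqM
    rw [dist_eq_norm, dist_eq_norm] at h1
    rwa [norm_sub_rev p m, norm_sub_rev q m]
  rw [key p, key q]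
  have : ‖p - m‖ ^ 2 ≤ ‖q - m‖ ^ 2 := by
    exact pow_le_pow_left₀ (norm_nonneg _) hle 2
  linarith
end

section
/- Let M be a nonempty closed subset of ℝ^N, let X_1, X_2, … be i.i.d. integrable ℝ^N-valued random vectors with mean μ = E[X_1], and suppose μ has a unique nearest point p in M. Then almost surely the following holds: for every ε > 0 there exists N₀ such that for all n ≥ N₀, every point q ∈ M satisfying ‖ X̄_n − q ‖ = inf { ‖ X̄_n − r ‖ : r ∈ M }, where X̄_n = (1/n) Σ_{i=1}^n X_i, satisfies ‖q − p‖ < ε. In particular any choice of nearest points of the sample means converges almost surely to p, so the extrinsic sample mean is a consistent estimator of the extrinsic mean. -/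
open MeasureTheory Filter ProbabilityTheory

lemma nearest_point_stability {N : ℕ} (M : Set (EuclideanSpace ℝ (Fin N)))
    (hM : M.Nonempty) (hMc : IsClosed M) (μ p : EuclideanSpace ℝ (Fin N)) (hpM : p ∈ M)
    (hunique : ∀ q ∈ M, dist μ q = Metric.infDist μ M → q = p)
    {ε : ℝ} (hε : 0 < ε) :
    ∃ δ > (0 : ℝ), ∀ x, dist x μ < δ → ∀ q ∈ M, dist x q = Metric.infDist x M →
      dist q p < ε := by
  by_contra h
  push_neg at h
  -- build sequences
  have hseq : ∀ n : ℕ, ∃ x, dist x μ < 1 / (n + 1) ∧ ∃ q ∈ M,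
      dist x q = Metric.infDist x M ∧ ε ≤ dist q p := by
    intro n
    obtain ⟨x, hx, q, hq, hqnear, hqfar⟩ := h (1 / (n + 1)) (by positivity)
    exact ⟨x, hx, q, hq, hqnear, hqfar⟩
  choose x hx q hqM hqnear hqfar using hseq
  have hxlim : Filter.Tendsto x atTop (nhds μ) := by
    rw [Metric.tendsto_atTop]
    intro δ hδ
    obtain ⟨n, hn⟩ := exists_nat_one_div_lt hδ
    refine ⟨n, fun m hm => lt_of_lt_of_le (lt_of_lt_of_le (hx m) ?_) hn.le⟩
    have : (n:ℝ)+1 ≤ (m:ℝ)+1 := by exact_mod_cast Nat.succ_le_succ hm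
    gcongr
  -- q n lies in a compact set
  have hqbound : ∀ n, q n ∈ M ∩ Metric.closedBall μ (Metric.infDist μ M + 2) := by
    intro n
    refine ⟨hqM n, ?_⟩
    have h1 : dist (x n) μ ≤ 1 := le_of_lt (lt_of_lt_of_le (hx n) (by
      rw [div_le_one (by positivity)]; linarith))
    have h2 : Metric.infDist (x n) M ≤ Metric.infDist μ M + dist (x n) μ :=
      Metric.infDist_le_infDist_add_dist
    have h3 : dist (q n) μ ≤ dist (q n) (x n) + dist (x n) μ := dist_triangle _ _ _
    have h4 : dist (q n) (x n) = Metric.infDist (x n) M := by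
      rw [dist_comm]; exact hqnear n
    rw [Metric.mem_closedBall]
    linarith
  have hK : IsCompact (M ∩ Metric.closedBall μ (Metric.infDist μ M + 2)) := by
    apply Metric.isCompact_of_isClosed_isBounded
    · exact hMc.inter Metric.isClosed_closedBall
    · exact Metric.isBounded_closedBall.subset (Set.inter_subset_right)
  obtain ⟨ql, hqlK, φ, hφmono, hφlim⟩ := hK.tendsto_subseq hqbound
  -- ql is a nearest point of μ
  have hdist : Filter.Tendsto (fun n => dist (x (φ n)) (q (φ n))) atTop (nhds (dist μ ql)) :=
    Filter.Tendsto.dist (hxlim.comp hφmono.tendsto_atTop) hφlim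
  have hinf : Filter.Tendsto (fun n => Metric.infDist (x (φ n)) M) atTop
      (nhds (Metric.infDist μ M)) :=
    ((Metric.continuous_infDist_pt M).tendsto μ).comp (hxlim.comp hφmono.tendsto_atTop)
  have heq : dist μ ql = Metric.infDist μ M := by
    have : (fun n => dist (x (φ n)) (q (φ n))) = fun n => Metric.infDist (x (φ n)) M := by
      funext n; exact hqnear (φ n)
    rw [this] at hdist
    exact tendsto_nhds_unique hdist hinf
  have : ql = p := hunique ql hqlK.1 heq
  subst this
  -- contradiction with dist (q n) p ≥ ε
  have : Filter.Tendsto (fun n => dist (q (φ n)) ql) atTop (nhds 0) := by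
    simpa using hφlim.dist (tendsto_const_nhds (x := ql))
  have := ge_of_tendsto this (Filter.Eventually.of_forall (fun n => hqfar (φ n)))
  linarith

/-- `M ⊆ ℝ^N` nonempty closed, `X₁, X₂, …` i.i.d. integrable random
vectors with mean `μ = E[X₁]` having a unique nearest point `p` in `M`.  Then almost
surely: for every `ε > 0`, eventually every nearest point `q ∈ M` of the sample mean
`X̄ₙ` satisfies `‖q - p‖ < ε`; hence any choice of nearest points of the sample means
converges a.s. to `p` (the extrinsic sample mean is a consistent estimator). -/
theorem extrinsic_sample_mean_consistent
    {N : ℕ} {Ω : Type*} [MeasureSpace Ω] [IsProbabilityMeasure (ℙ : Measure Ω)]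
    (M : Set (EuclideanSpace ℝ (Fin N))) (hM : M.Nonempty) (hMc : IsClosed M)
    (X : ℕ → Ω → EuclideanSpace ℝ (Fin N))
    (hmeas : ∀ i, Measurable (X i))
    (hindep : iIndepFun X ℙ)
    (hident : ∀ i, Measure.map (X i) ℙ = Measure.map (X 0) ℙ)
    (hint : Integrable (X 0) ℙ)
    (μ : EuclideanSpace ℝ (Fin N)) (hμ : μ = ∫ ω, X 0 ω)
    (p : EuclideanSpace ℝ (Fin N)) (hpM : p ∈ M)
    (hp : dist μ p = Metric.infDist μ M)
    (hunique : ∀ q ∈ M, dist μ q = Metric.infDist μ M → q = p) :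
    ∀ᵐ ω : Ω, ∀ ε > (0 : ℝ), ∃ N₀ : ℕ, ∀ n ≥ N₀,
      ∀ q ∈ M,
        dist ((n : ℝ)⁻¹ • ∑ i ∈ Finset.range n, X i ω) q =
          Metric.infDist ((n : ℝ)⁻¹ • ∑ i ∈ Finset.range n, X i ω) M →
        ‖q - p‖ < ε := by
  have hslln := strong_law_ae X hint
    (fun i j hij => hindep.indepFun hij)
    (fun i => ⟨(hmeas i).aemeasurable, (hmeas 0).aemeasurable, hident i⟩)
  filter_upwards [hslln] with ω hω
  rw [← hμ] at hω
  intro ε hε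
  obtain ⟨δ, hδ, hδprop⟩ := nearest_point_stability M hM hMc μ p hpM hunique hε
  rw [Metric.tendsto_atTop] at hω
  obtain ⟨N₀, hN₀⟩ := hω δ hδ
  refine ⟨N₀, fun n hn q hqM hqnear => ?_⟩
  rw [← dist_eq_norm]
  exact hδprop _ (hN₀ n hn) q hqM hqnear
end

section
/- Let X_1, …, X_n be unit vectors in ℂ^N and let K = (1/n) Σ_{i=1}^n X_i X_i* be the associated Hermitian matrix. Then the function u ↦ Σ_{i=1}^n ‖u u* − X_i X_i*‖_F² attains its minimum over unit vectors u ∈ ℂ^N, and a unit vector u is a minimizer if and only if u is an eigenvector of K whose eigenvalue equals the largest eigenvalue of K. (Hence the Veronese–Whitney extrinsic sample mean of [X_1], …, [X_n] is the projective point of an eigenvector of K corresponding to its largest eigenvalue.) -/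
open scoped ComplexConjugate
open scoped InnerProductSpace

/-- For unit vectors `X₁, …, Xₙ ∈ ℂ^N` and `K = (1/n) Σᵢ Xᵢ Xᵢ*`, the
function `u ↦ Σᵢ ‖u u* − Xᵢ Xᵢ*‖_F²` attains its minimum over unit vectors, and a
unit vector `u` is a minimizer iff `u` is an eigenvector of `K` whose eigenvalue is
the largest eigenvalue of `K` (the VW extrinsic sample mean is the projective point
of such an eigenvector). -/
theorem vw_extrinsic_sample_mean
    {N n : ℕ} (hN : 0 < N) (hn : 0 < n)
    (X : Fin n → EuclideanSpace ℂ (Fin N)) (hX : ∀ i, ‖X i‖ = 1)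
    (K : Matrix (Fin N) (Fin N) ℂ)
    (hK : K = (n : ℂ)⁻¹ • ∑ i : Fin n, Matrix.of fun j k => X i j * conj (X i k))
    (f : EuclideanSpace ℂ (Fin N) → ℝ)
    (hf : f = fun u => ∑ i : Fin n, ∑ j : Fin N, ∑ k : Fin N,
      ‖u j * conj (u k) - X i j * conj (X i k)‖ ^ 2) :
    (∃ u : EuclideanSpace ℂ (Fin N), ‖u‖ = 1 ∧ ∀ v : EuclideanSpace ℂ (Fin N),
        ‖v‖ = 1 → f u ≤ f v) ∧
      ∀ u : EuclideanSpace ℂ (Fin N), ‖u‖ = 1 →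
        ((∀ v : EuclideanSpace ℂ (Fin N), ‖v‖ = 1 → f u ≤ f v) ↔
          ∃ η : ℝ, K.mulVec (fun j => u j) = (η : ℂ) • (fun j => u j) ∧
            ∀ ξ : ℝ, (∃ v : Fin N → ℂ, v ≠ 0 ∧ K.mulVec v = (ξ : ℂ) • v) → ξ ≤ η) := by
  classical
  -- Hermitian
  have hKH : K.IsHermitian := by
    rw [Matrix.IsHermitian, hK]
    ext j k
    simp [Matrix.conjTranspose_apply, Matrix.smul_apply, Matrix.sum_apply, map_sum, map_mul,
      mul_comm]
  set T : EuclideanSpace ℂ (Fin N) →L[ℂ] EuclideanSpace ℂ (Fin N) := LinearMap.toContinuousLinearMap (Matrix.toEuclideanLin K) with hT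
  have hTapp : ∀ (u : EuclideanSpace ℂ (Fin N)) (j : Fin N), T u j = ∑ k, K j k * u k := by
    intro u j; rfl
  have hTmul : ∀ u : EuclideanSpace ℂ (Fin N), K.mulVec (fun j => u j) = fun j => T u j := by
    intro u; rfl
  have hsym : IsSelfAdjoint T := by
    rw [ContinuousLinearMap.isSelfAdjoint_iff_isSymmetric]
    have h := Matrix.isHermitian_iff_isSymmetric.mp hKH
    simpa [hT, LinearMap.coe_toContinuousLinearMap] using h
  set c : Fin n → EuclideanSpace ℂ (Fin N) → ℂ := fun i u => ∑ j, conj (X i j) * u j with hc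
  have hKc : ∀ j k, K j k = (n:ℂ)⁻¹ * ∑ i, X i j * conj (X i k) := by
    intro j k; rw [hK]; simp [Matrix.sum_apply]
  have hinner : ∀ u : EuclideanSpace ℂ (Fin N), (⟪T u, u⟫_ℂ) = (n : ℂ)⁻¹ * ∑ i, conj (c i u) * (c i u) := by
    intro u
    simp only [PiLp.inner_apply, RCLike.inner_apply, hTapp, hKc, hc, map_sum, map_mul,
      map_inv₀, map_natCast, Complex.conj_conj, Finset.mul_sum, Finset.sum_mul]
    have h3 : ∀ (F : Fin N → Fin N → Fin n → ℂ),
        (∑ j, ∑ k, ∑ i, F j k i) = ∑ i, ∑ j, ∑ k, F j k i := by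
      intro F
      rw [show (∑ j, ∑ k, ∑ i, F j k i) = ∑ j, ∑ i, ∑ k, F j k i from
        Finset.sum_congr rfl fun j _ => Finset.sum_comm, Finset.sum_comm]
    rw [h3 (fun j k i => u j * ((n:ℂ)⁻¹ * ((starRingEnd ℂ) (X i j) * X i k) * (starRingEnd ℂ) (u k)))]
    refine Finset.sum_congr rfl fun i _ => ?_
    refine Finset.sum_congr rfl fun j _ =>
      Finset.sum_congr rfl fun k _ => by ring
  have hre : ∀ u : EuclideanSpace ℂ (Fin N), T.reApplyInnerSelf u = (n : ℝ)⁻¹ * ∑ i, Complex.normSq (c i u) := by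
    intro u
    have hz : ∀ z : ℂ, conj z * z = (Complex.normSq z : ℂ) := fun z => by
      rw [mul_comm, Complex.mul_conj]
    rw [ContinuousLinearMap.reApplyInnerSelf_apply, hinner u]
    simp only [hz, ← Complex.ofReal_sum]
    rw [show ((n:ℂ))⁻¹ = (((n:ℝ)⁻¹ : ℝ) : ℂ) by push_cast; ring, ← Complex.ofReal_mul]
    exact Complex.ofReal_re _
  have hsq : ∀ z : ℂ, ‖z‖^2 = Complex.normSq z := fun z => by
    exact Complex.sq_norm z
  have hnorm1 : ∀ u : EuclideanSpace ℂ (Fin N), ‖u‖ = 1 → ∑ j, Complex.normSq (u j) = 1 := by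
    intro u hu
    have h0 : 0 ≤ ∑ j, ‖u j‖^2 := Finset.sum_nonneg fun _ _ => sq_nonneg _
    have h1 : ∑ j, ‖u j‖^2 = 1 := by
      rw [EuclideanSpace.norm_eq] at hu
      nlinarith [Real.sq_sqrt h0]
    calc ∑ j, Complex.normSq (u j) = ∑ j, ‖u j‖^2 :=
          Finset.sum_congr rfl fun j _ => (hsq (u j)).symm
      _ = 1 := h1
  have hnormX : ∀ i, ∑ j, Complex.normSq (X i j) = 1 := fun i => hnorm1 (X i) (hX i)
  have hterm : ∀ (i : Fin n) (u : EuclideanSpace ℂ (Fin N)),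
      (∑ j, ∑ k, ‖u j * conj (u k) - X i j * conj (X i k)‖ ^ 2)
      = (∑ j, Complex.normSq (u j)) * (∑ k, Complex.normSq (u k))
        + (∑ j, Complex.normSq (X i j)) * (∑ k, Complex.normSq (X i k))
        - 2 * Complex.normSq (c i u) := by
    intro i u
    calc (∑ j, ∑ k, ‖u j * conj (u k) - X i j * conj (X i k)‖ ^ 2)
        = ∑ j, ∑ k, (Complex.normSq (u j) * Complex.normSq (u k)
            + Complex.normSq (X i j) * Complex.normSq (X i k)
            - 2 * ((u j * conj (X i j)) * (conj (u k) * X i k)).re) := by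
          refine Finset.sum_congr rfl fun j _ => Finset.sum_congr rfl fun k _ => ?_
          rw [hsq, Complex.normSq_sub, Complex.normSq_mul, Complex.normSq_mul,
            Complex.normSq_conj, Complex.normSq_conj,
            show (u j * conj (u k) * conj (X i j * conj (X i k)))
              = (u j * conj (X i j)) * (conj (u k) * X i k) by
                simp only [map_mul, Complex.conj_conj]; ring]
      _ = (∑ j, Complex.normSq (u j)) * (∑ k, Complex.normSq (u k))
          + (∑ j, Complex.normSq (X i j)) * (∑ k, Complex.normSq (X i k))
          - 2 * Complex.normSq (c i u) := by
          simp only [Finset.sum_sub_distrib, Finset.sum_add_distrib,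
            ← Finset.sum_mul_sum, ← Finset.mul_sum, ← Complex.re_sum]
          rw [← Finset.sum_mul, ← Finset.sum_mul]
          congr 2
          rw [← Finset.sum_mul,
            show (∑ j, u j * conj (X i j)) = c i u by
              rw [hc]; exact Finset.sum_congr rfl fun j _ => mul_comm _ _,
            show (∑ k, conj (u k) * X i k) = conj (c i u) by
              rw [hc, map_sum]
              exact Finset.sum_congr rfl fun k _ => by
                rw [map_mul, Complex.conj_conj]; ring,
            Complex.mul_conj, Complex.ofReal_re]
  have hfA : ∀ u : EuclideanSpace ℂ (Fin N), ‖u‖ = 1 → f u = 2 * n - 2 * ∑ i, Complex.normSq (c i u) := by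
    intro u hu
    rw [hf]
    simp only [hterm, hnorm1 u hu, hnormX, one_mul]
    rw [Finset.sum_sub_distrib]
    simp [Finset.mul_sum, Finset.card_univ]
    ring
  -- comparison
  have hcomp : ∀ u v : EuclideanSpace ℂ (Fin N), ‖u‖ = 1 → ‖v‖ = 1 →
      (f u ≤ f v ↔ T.reApplyInnerSelf v ≤ T.reApplyInnerSelf u) := by
    intro u v hu hv
    rw [hfA u hu, hfA v hv, hre, hre]
    constructor
    · intro h
      have : ∑ i, Complex.normSq (c i v) ≤ ∑ i, Complex.normSq (c i u) := by linarith
      have hn' : (0:ℝ) < (n:ℝ)⁻¹ := by positivity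
      nlinarith
    · intro h
      have hn' : (0:ℝ) ≤ (n:ℝ) := by positivity
      have : ∑ i, Complex.normSq (c i v) ≤ ∑ i, Complex.normSq (c i u) := by
        have := mul_le_mul_of_nonneg_left h hn'
        rw [← mul_assoc, ← mul_assoc, mul_inv_cancel₀ (by exact_mod_cast hn.ne' : (n:ℝ) ≠ 0),
          one_mul, one_mul] at this
        exact this
      linarith
  -- maximizer of Rayleigh on the sphere
  obtain ⟨w, hw, hwmax⟩ : ∃ w : EuclideanSpace ℂ (Fin N), ‖w‖ = 1 ∧ ∀ v : EuclideanSpace ℂ (Fin N), ‖v‖ = 1 →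
      T.reApplyInnerSelf v ≤ T.reApplyInnerSelf w := by
    have hcpt : IsCompact (Metric.sphere (0:EuclideanSpace ℂ (Fin N)) 1) := isCompact_sphere 0 1
    have hne : (Metric.sphere (0:EuclideanSpace ℂ (Fin N)) 1).Nonempty := by
      refine ⟨EuclideanSpace.single ⟨0, hN⟩ 1, ?_⟩
      rw [mem_sphere_zero_iff_norm, EuclideanSpace.norm_single]; simp
    obtain ⟨w, hw, hmax⟩ := hcpt.exists_isMaxOn hne T.reApplyInnerSelf_continuous.continuousOn
    exact ⟨w, by simpa using hw, fun v hv => hmax (by simpa using hv)⟩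
  have hmin : ∀ v : EuclideanSpace ℂ (Fin N), ‖v‖ = 1 → f w ≤ f v := fun v hv =>
    (hcomp w v hw hv).mpr (hwmax v hv)
  -- eigen extraction from a max
  have heig : ∀ u : EuclideanSpace ℂ (Fin N), ‖u‖ = 1 → (∀ v : EuclideanSpace ℂ (Fin N), ‖v‖ = 1 → T.reApplyInnerSelf v ≤ T.reApplyInnerSelf u) →
      T u = ((T.reApplyInnerSelf u : ℝ) : ℂ) • u := by
    intro u hu hmax
    have hext : IsMaxOn T.reApplyInnerSelf (Metric.sphere (0:EuclideanSpace ℂ (Fin N)) ‖u‖) u := by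
      intro x hx
      exact hmax x (by simpa [hu] using hx)
    have := hsym.eq_smul_self_of_isLocalExtrOn (Or.inr hext.localize)
    rwa [ContinuousLinearMap.rayleighQuotient, hu, one_pow, div_one] at this
  refine ⟨⟨w, hw, hmin⟩, ?_⟩
  intro u hu
  constructor
  · -- minimizer → top eigenvector
    intro humin
    have humax : ∀ v : EuclideanSpace ℂ (Fin N), ‖v‖ = 1 → T.reApplyInnerSelf v ≤ T.reApplyInnerSelf u := by
      intro v hv; exact (hcomp u v hu hv).mp (humin v hv)
    refine ⟨T.reApplyInnerSelf u, ?_, ?_⟩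
    · have h := heig u hu humax
      rw [hTmul u]
      funext j
      have := congrFun (congrArg (fun (z : EuclideanSpace ℂ (Fin N)) => (fun j => z j)) h) j
      simpa using this
    · rintro ξ ⟨v, hv0, hvK⟩
      set v' : EuclideanSpace ℂ (Fin N) := (WithLp.equiv 2 (Fin N → ℂ)).symm v with hv'
      have hv'0 : v' ≠ 0 := by
        intro h
        exact hv0 (by funext j; exact congrFun (congrArg (WithLp.equiv 2 (Fin N → ℂ)) h) j)
      have ha : 0 < ‖v'‖ := norm_pos_iff.mpr hv'0
      set s : EuclideanSpace ℂ (Fin N) := ((‖v'‖⁻¹ : ℝ) : ℂ) • v' with hs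
      have hs1 : ‖s‖ = 1 := by
        rw [hs, norm_smul, Complex.norm_real, Real.norm_eq_abs,
          abs_of_nonneg (inv_nonneg.mpr ha.le), inv_mul_cancel₀ ha.ne']
      have hTs : T s = (ξ:ℂ) • s := by
        rw [show T s = (WithLp.equiv 2 (Fin N → ℂ)).symm (K.mulVec fun k => s k) from rfl,
          show (fun k => s k) = ((‖v'‖⁻¹ : ℝ) : ℂ) • v from rfl,
          Matrix.mulVec_smul, hvK, smul_comm]
        rfl
      have hres : T.reApplyInnerSelf s = ξ := by
        rw [ContinuousLinearMap.reApplyInnerSelf_apply, hTs, inner_smul_left]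
        simp [inner_self_eq_norm_sq_to_K, hs1]
      rw [← hres]; exact humax s hs1
  · -- top eigenvector → minimizer
    rintro ⟨η, hηe, hηmax⟩ v hv
    have hTu : T u = ((η : ℝ) : ℂ) • u := by
      rw [show T u = (WithLp.equiv 2 (Fin N → ℂ)).symm (K.mulVec fun j => u j) from rfl, hηe]
      rfl
    have hreu : T.reApplyInnerSelf u = η := by
      rw [ContinuousLinearMap.reApplyInnerSelf_apply, hTu, inner_smul_left]
      simp [inner_self_eq_norm_sq_to_K, hu]
    -- w is an eigenvector with eigenvalue reApply w, so reApply w ≤ η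
    have hww : T w = ((T.reApplyInnerSelf w : ℝ) : ℂ) • w := heig w hw hwmax
    have hwle : T.reApplyInnerSelf w ≤ η := by
      refine hηmax _ ⟨(fun j => w j), ?_, ?_⟩
      · intro h0
        have : w = 0 := by
          ext j; exact congrFun h0 j
        rw [this] at hw; simp at hw
      · rw [hTmul w]
        funext j
        have := congrFun (congrArg (fun (z : EuclideanSpace ℂ (Fin N)) => (fun j => z j)) hww) j
        simpa using this
    have : T.reApplyInnerSelf v ≤ T.reApplyInnerSelf u := by
      rw [hreu]
      exact le_trans (hwmax v hv) hwle
    exact (hcomp u v hu hv).mpr this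
end

section
/- Let Γ be a random vector in ℂ^N with ‖Γ‖ = 1 almost surely, and let K = E[Γ Γ*] be its expected rank-one matrix. Then a unit vector u ∈ ℂ^N minimizes E‖u u* − Γ Γ*‖_F² over unit vectors if and only if u is an eigenvector of K whose eigenvalue equals the largest eigenvalue of K. (Hence the Veronese–Whitney extrinsic mean of the random projective point [Γ] is the projective point of an eigenvector of E[ΓΓ*] corresponding to its largest eigenvalue.) -/
open MeasureTheory ProbabilityTheory
open scoped ComplexConjugate

/-- The product (Borel) measurable structure on `ℂ^N`. -/
noncomputable instance {N : ℕ} : MeasurableSpace (EuclideanSpace ℂ (Fin N)) :=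
  MeasurableSpace.comap (fun x : EuclideanSpace ℂ (Fin N) => x.ofLp) MeasurableSpace.pi

section Aux
open Matrix
open Matrix
open scoped ComplexConjugate

variable {N : ℕ} {K : Matrix (Fin N) (Fin N) ℂ}

/-- quadratic form via spectral decomposition -/
private lemma quad_eq (hK : K.IsHermitian) (v : Fin N → ℂ) :
    star v ⬝ᵥ K *ᵥ v = ∑ i, (hK.eigenvalues i : ℂ) *
      ((‖((star (hK.eigenvectorUnitary : Matrix (Fin N) (Fin N) ℂ)) *ᵥ v) i‖ : ℂ) ^ 2) := by
  set U : Matrix (Fin N) (Fin N) ℂ := (hK.eigenvectorUnitary : Matrix (Fin N) (Fin N) ℂ) with hU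
  set w : Fin N → ℂ := star U *ᵥ v with hw
  have hsw : star v ᵥ* U = star w := by
    rw [hw, star_mulVec]
    simp [star_eq_conjTranspose]
  conv_lhs => rw [hK.spectral_theorem, Unitary.conjStarAlgAut_apply]
  rw [← hU, ← mulVec_mulVec, ← mulVec_mulVec, dotProduct_mulVec, hsw]
  have hdiag : (diagonal (RCLike.ofReal ∘ hK.eigenvalues) : Matrix (Fin N) (Fin N) ℂ) *ᵥ w
      = fun i => (hK.eigenvalues i : ℂ) * w i := by
    ext i; simp [mulVec_diagonal]
  rw [hdiag]
  simp only [dotProduct, Pi.star_apply]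
  refine Finset.sum_congr rfl fun i _ => ?_
  have : w i * conj (w i) = (‖w i‖ : ℂ) ^ 2 := Complex.mul_conj' (w i)
  rw [show star (w i) = conj (w i) from rfl]
  rw [← this]; ring

private lemma norm_w_eq (hK : K.IsHermitian) (v : Fin N → ℂ) :
    ∑ i, (‖((star (hK.eigenvectorUnitary : Matrix (Fin N) (Fin N) ℂ)) *ᵥ v) i‖ : ℝ) ^ 2
      = ∑ i, ‖v i‖ ^ 2 := by
  set U : Matrix (Fin N) (Fin N) ℂ := (hK.eigenvectorUnitary : Matrix (Fin N) (Fin N) ℂ) with hU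
  set w : Fin N → ℂ := star U *ᵥ v with hw
  have hsw : star v ᵥ* U = star w := by
    rw [hw, star_mulVec]
    simp [star_eq_conjTranspose]
  have h1 : star w ⬝ᵥ w = star v ⬝ᵥ v := by
    rw [hw, ← hsw, ← dotProduct_mulVec, mulVec_mulVec,
      (Matrix.mem_unitaryGroup_iff).mp hK.eigenvectorUnitary.2, one_mulVec]
  have h2 : ∀ x : Fin N → ℂ, star x ⬝ᵥ x = ((∑ i, ‖x i‖ ^ 2 : ℝ) : ℂ) := by
    intro x
    simp only [dotProduct, Pi.star_apply, Complex.ofReal_sum, Complex.ofReal_pow]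
    refine Finset.sum_congr rfl fun i _ => ?_
    rw [show star (x i) = conj (x i) from rfl, mul_comm]
    exact Complex.mul_conj' (x i)
  rw [h2, h2] at h1
  exact_mod_cast h1

private lemma star_dot_self (x : Fin N → ℂ) : star x ⬝ᵥ x = ((∑ i, ‖x i‖ ^ 2 : ℝ) : ℂ) := by
  simp only [dotProduct, Pi.star_apply, Complex.ofReal_sum, Complex.ofReal_pow]
  refine Finset.sum_congr rfl fun i _ => ?_
  rw [show star (x i) = conj (x i) from rfl, mul_comm]
  exact Complex.mul_conj' (x i)

private lemma quad_re (hK : K.IsHermitian) (v : Fin N → ℂ) :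
    (star v ⬝ᵥ K *ᵥ v).re = ∑ i, hK.eigenvalues i *
      ‖((star (hK.eigenvectorUnitary : Matrix (Fin N) (Fin N) ℂ)) *ᵥ v) i‖ ^ 2 := by
  rw [quad_eq hK v]
  norm_cast

private lemma eig_dot {ξ : ℝ} {v : Fin N → ℂ} (h : K *ᵥ v = (ξ : ℂ) • v) :
    (star v ⬝ᵥ K *ᵥ v).re = ξ * ∑ i, ‖v i‖ ^ 2 := by
  rw [h, dotProduct_smul, star_dot_self, smul_eq_mul]
  norm_cast

private lemma sum_sq_pos {v : Fin N → ℂ} (hv : v ≠ 0) : 0 < ∑ i, ‖v i‖ ^ 2 := by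
  obtain ⟨i, hi⟩ := Function.ne_iff.mp hv
  refine Finset.sum_pos' (fun j _ => by positivity) ⟨i, Finset.mem_univ i, ?_⟩
  exact pow_pos (norm_pos_iff.mpr hi) 2

private lemma eig_vec (hK : K.IsHermitian) (i : Fin N) :
    ∃ v : Fin N → ℂ, v ≠ 0 ∧ K *ᵥ v = ((hK.eigenvalues i : ℝ) : ℂ) • v := by
  refine ⟨(WithLp.equiv 2 _) (hK.eigenvectorBasis i), ?_, ?_⟩
  · intro h
    apply hK.eigenvectorBasis.orthonormal.ne_zero i
    ext j; exact congrFun h j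
  · rw [show (WithLp.equiv 2 (Fin N → ℂ)) (hK.eigenvectorBasis i) = (hK.eigenvectorBasis i).ofLp from rfl,
      hK.mulVec_eigenvectorBasis i]
    ext j
    simp [Complex.real_smul]

private theorem rayleigh_iff (hK : K.IsHermitian) (u : Fin N → ℂ) (hu : ∑ j, ‖u j‖ ^ 2 = 1) :
    (∀ v : Fin N → ℂ, ∑ j, ‖v j‖ ^ 2 = 1 → (star v ⬝ᵥ K *ᵥ v).re ≤ (star u ⬝ᵥ K *ᵥ u).re) ↔
    (∃ η : ℝ, K *ᵥ u = (η : ℂ) • u ∧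
      ∀ ξ : ℝ, (∃ v : Fin N → ℂ, v ≠ 0 ∧ K *ᵥ v = (ξ : ℂ) • v) → ξ ≤ η) := by
  set U : Matrix (Fin N) (Fin N) ℂ := (hK.eigenvectorUnitary : Matrix (Fin N) (Fin N) ℂ) with hU
  have hUU : U * star U = 1 := (Matrix.mem_unitaryGroup_iff).mp hK.eigenvectorUnitary.2
  constructor
  · intro H
    have hne : Nonempty (Fin N) := by
      rcases Nat.eq_zero_or_pos N with h0 | hpos
      · subst h0; simp at hu
      · exact Fin.pos_iff_nonempty.mp hpos
    obtain ⟨i₀, -, hi₀⟩ := Finset.exists_max_image Finset.univ hK.eigenvalues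
      ⟨Classical.arbitrary (Fin N), Finset.mem_univ _⟩
    set η := hK.eigenvalues i₀ with hη
    -- upper bound for all v
    have hub : ∀ v : Fin N → ℂ, (star v ⬝ᵥ K *ᵥ v).re ≤ η * ∑ i, ‖v i‖ ^ 2 := by
      intro v
      rw [quad_re hK v, ← norm_w_eq hK v, Finset.mul_sum]
      exact Finset.sum_le_sum fun i _ =>
        mul_le_mul_of_nonneg_right (hi₀ i (Finset.mem_univ i)) (by positivity)
    -- the eigenvector B i₀ is a unit vector attaining η
    have hB : ∑ j, ‖(WithLp.equiv 2 _) (hK.eigenvectorBasis i₀) j‖ ^ 2 = 1 := by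
      have h1 : ‖hK.eigenvectorBasis i₀‖ = 1 := hK.eigenvectorBasis.orthonormal.1 i₀
      have h2 : ‖hK.eigenvectorBasis i₀‖ ^ 2 = ∑ j, ‖(WithLp.equiv 2 _) (hK.eigenvectorBasis i₀) j‖ ^ 2 := by
        rw [EuclideanSpace.norm_eq, Real.sq_sqrt (Finset.sum_nonneg fun i _ => by positivity)]
        rfl
      rw [h1, one_pow] at h2
      exact h2.symm
    have hBval : (star ((WithLp.equiv 2 _) (hK.eigenvectorBasis i₀)) ⬝ᵥ
        K *ᵥ (WithLp.equiv 2 _) (hK.eigenvectorBasis i₀)).re = η := (hK.eigenvalues_eq i₀).symm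
    have hRu : (star u ⬝ᵥ K *ᵥ u).re = η := by
      have h1 := H _ hB
      rw [hBval] at h1
      have h2 := hub u
      rw [hu, mul_one] at h2
      linarith
    refine ⟨η, ?_, ?_⟩
    · -- K *ᵥ u = η • u
      set w : Fin N → ℂ := star U *ᵥ u with hw
      have hwsum : ∑ i, ‖w i‖ ^ 2 = 1 := by rw [hw]; rw [norm_w_eq hK u]; exact hu
      have hzero : ∀ i ∈ Finset.univ, (η - hK.eigenvalues i) * ‖w i‖ ^ 2 = 0 := by
        have hsum0 : ∑ i, (η - hK.eigenvalues i) * ‖w i‖ ^ 2 = 0 := by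
          have := quad_re hK u
          rw [hRu] at this
          simp only [sub_mul, Finset.sum_sub_distrib, ← Finset.mul_sum, hwsum, mul_one]
          rw [← this]
          ring
        exact (Finset.sum_eq_zero_iff_of_nonneg fun i _ =>
          mul_nonneg (sub_nonneg.mpr (hi₀ i (Finset.mem_univ i))) (by positivity)).mp hsum0
      have hlam : ∀ i, (hK.eigenvalues i : ℂ) * w i = (η : ℂ) * w i := by
        intro i
        rcases mul_eq_zero.mp (hzero i (Finset.mem_univ i)) with h | h
        · have : hK.eigenvalues i = η := by linarith [sub_eq_zero.mp h]
          rw [this]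
        · have : w i = 0 := by
            have := pow_eq_zero_iff (n := 2) (by norm_num) |>.mp h
            simpa using this
          rw [this, mul_zero, mul_zero]
      have hKu : K *ᵥ u = U *ᵥ (diagonal (RCLike.ofReal ∘ hK.eigenvalues) *ᵥ w) := by
        rw [hw, mulVec_mulVec, mulVec_mulVec, hU]
        conv_lhs => rw [hK.spectral_theorem, Unitary.conjStarAlgAut_apply]
      have hD : diagonal (RCLike.ofReal ∘ hK.eigenvalues) *ᵥ w = fun i => (hK.eigenvalues i : ℂ) * w i := by
        ext i; simp [mulVec_diagonal]
      rw [hKu, hD]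
      have : (fun i => (hK.eigenvalues i : ℂ) * w i) = (η : ℂ) • w := by
        ext i; rw [hlam i]; rfl
      rw [this, mulVec_smul]
      congr 1
      rw [hw, mulVec_mulVec, hUU, one_mulVec]
    · intro ξ ⟨v, hv0, hv⟩
      have h1 := eig_dot hv
      have h2 := hub v
      rw [h1] at h2
      have h3 := sum_sq_pos hv0
      exact le_of_mul_le_mul_right h2 h3
  · rintro ⟨η, hKu, hmax⟩ v hv
    have hRu : (star u ⬝ᵥ K *ᵥ u).re = η := by
      rw [eig_dot hKu, hu, mul_one]
    have hle : ∀ i, hK.eigenvalues i ≤ η := fun i => hmax _ (eig_vec hK i)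
    rw [hRu, quad_re hK v]
    calc ∑ i, hK.eigenvalues i * ‖(star U *ᵥ v) i‖ ^ 2
        ≤ ∑ i, η * ‖(star U *ᵥ v) i‖ ^ 2 :=
          Finset.sum_le_sum fun i _ => mul_le_mul_of_nonneg_right (hle i) (by positivity)
      _ = η * ∑ i, ‖(star U *ᵥ v) i‖ ^ 2 := by rw [Finset.mul_sum]
      _ = η := by rw [norm_w_eq hK v, hv, mul_one]

variable {N : ℕ}

private lemma mul_conj'' (z : ℂ) : z * conj z = ((‖z‖ ^ 2 : ℝ) : ℂ) := by
  rw [Complex.mul_conj']; push_cast; ring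

private lemma sum_self_conj (a : Fin N → ℂ) (ha : ∑ j, ‖a j‖ ^ 2 = 1) :
    ∑ j, a j * conj (a j) = 1 := by
  have : ∑ j, a j * conj (a j) = ((∑ j, ‖a j‖ ^ 2 : ℝ) : ℂ) := by
    push_cast
    exact Finset.sum_congr rfl fun j _ => by rw [mul_conj'']; push_cast; ring
  rw [this, ha]; norm_num

private lemma pointwise_expand (a b : Fin N → ℂ) (ha : ∑ j, ‖a j‖ ^ 2 = 1)
    (hb : ∑ j, ‖b j‖ ^ 2 = 1) :
    ∑ j, ∑ k, ‖a j * conj (a k) - b j * conj (b k)‖ ^ 2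
      = 2 - 2 * ‖∑ j, a j * conj (b j)‖ ^ 2 := by
  set z : ℂ := ∑ j, a j * conj (b j) with hz
  have hC : ∑ j, ∑ k, ((a j * conj (a k) - b j * conj (b k)) *
      conj (a j * conj (a k) - b j * conj (b k)))
      = ((2 - 2 * ‖z‖ ^ 2 : ℝ) : ℂ) := by
    have main : ∀ j k : Fin N, (a j * conj (a k) - b j * conj (b k)) *
        conj (a j * conj (a k) - b j * conj (b k))
        = (a j * conj (a j)) * (a k * conj (a k)) + (b j * conj (b j)) * (b k * conj (b k))
          - (a j * conj (b j)) * (conj (a k) * b k) - (b j * conj (a j)) * (conj (b k) * a k) := by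
      intro j k
      simp only [map_sub, _root_.map_mul, Complex.conj_conj]
      ring
    simp only [main]
    simp only [Finset.sum_sub_distrib, Finset.sum_add_distrib, ← Finset.sum_mul_sum]
    rw [sum_self_conj a ha, sum_self_conj b hb]
    have h1 : ∑ k, conj (a k) * b k = conj z := by
      rw [hz, map_sum]
      refine Finset.sum_congr rfl fun k _ => ?_
      simp only [_root_.map_mul, Complex.conj_conj]
    have h2 : ∑ j, b j * conj (a j) = conj z := by
      rw [hz, map_sum]
      refine Finset.sum_congr rfl fun k _ => ?_
      simp only [_root_.map_mul, Complex.conj_conj]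
      ring
    have h3 : ∑ k, conj (b k) * a k = z := by
      rw [hz]
      exact Finset.sum_congr rfl fun k _ => by ring
    rw [h1, h2, h3]
    have h4 : z * conj z = ((‖z‖ ^ 2 : ℝ) : ℂ) := mul_conj'' z
    have h5 : conj z * z = ((‖z‖ ^ 2 : ℝ) : ℂ) := by rw [mul_comm]; exact h4
    rw [h4, h5]
    push_cast
    ring
  have hre : ∀ x : ℂ, (‖x‖ ^ 2 : ℝ) = (x * conj x).re := by
    intro x; rw [mul_conj'', Complex.ofReal_re]
  calc ∑ j, ∑ k, ‖a j * conj (a k) - b j * conj (b k)‖ ^ 2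
      = ∑ j, ∑ k, ((a j * conj (a k) - b j * conj (b k)) *
          conj (a j * conj (a k) - b j * conj (b k))).re :=
        Finset.sum_congr rfl fun j _ => Finset.sum_congr rfl fun k _ => hre _
    _ = (∑ j, ∑ k, ((a j * conj (a k) - b j * conj (b k)) *
          conj (a j * conj (a k) - b j * conj (b k)))).re := by
        rw [Complex.re_sum]
        exact Finset.sum_congr rfl fun j _ => (Complex.re_sum _ _).symm
    _ = 2 - 2 * ‖z‖ ^ 2 := by rw [hC, Complex.ofReal_re]
end Aux

open Matrix in
/-- Let `Γ` be a random unit vector in `ℂ^N` and `K = E[Γ Γ*]`.  A unit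
vector `u` minimizes `E‖u u* − Γ Γ*‖_F²` over unit vectors iff `u` is an eigenvector
of `K` whose eigenvalue is the largest eigenvalue of `K` (the VW extrinsic mean of
`[Γ]` is the projective point of such an eigenvector of `E[ΓΓ*]`). -/
theorem vw_extrinsic_mean_random
    {N : ℕ} {Ω : Type*} [MeasureSpace Ω] [IsProbabilityMeasure (ℙ : Measure Ω)]
    (Γ : Ω → EuclideanSpace ℂ (Fin N)) (hΓmeas : Measurable Γ)
    (hΓ : ∀ᵐ ω : Ω, ‖Γ ω‖ = 1)
    (K : Matrix (Fin N) (Fin N) ℂ)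
    (hK : K = Matrix.of fun j k => ∫ ω, Γ ω j * conj (Γ ω k))
    (f : EuclideanSpace ℂ (Fin N) → ℝ)
    (hf : f = fun u => ∫ ω, ∑ j : Fin N, ∑ k : Fin N,
      ‖u j * conj (u k) - Γ ω j * conj (Γ ω k)‖ ^ 2) :
    ∀ u : EuclideanSpace ℂ (Fin N), ‖u‖ = 1 →
      ((∀ v : EuclideanSpace ℂ (Fin N), ‖v‖ = 1 → f u ≤ f v) ↔
        ∃ η : ℝ, K.mulVec (fun j => u j) = (η : ℂ) • (fun j => u j) ∧
          ∀ ξ : ℝ, (∃ v : Fin N → ℂ, v ≠ 0 ∧ K.mulVec v = (ξ : ℂ) • v) → ξ ≤ η) := by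
  intro u hu
  have hm : ∀ j : Fin N, Measurable fun ω => Γ ω j := fun j =>
    (measurable_pi_apply j).comp ((comap_measurable _).comp hΓmeas)
  have hmc : ∀ j : Fin N, Measurable fun ω => conj (Γ ω j) := fun j =>
    Complex.continuous_conj.measurable.comp (hm j)
  have hnorm1 : ∀ v : EuclideanSpace ℂ (Fin N), ‖v‖ = 1 → ∑ j, ‖v j‖ ^ 2 = 1 := by
    intro v hv
    have h0 : (0:ℝ) ≤ ∑ j, ‖v j‖ ^ 2 := Finset.sum_nonneg fun j _ => by positivity
    have h2 := Real.sq_sqrt h0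
    have h3 := EuclideanSpace.norm_eq v
    rw [hv] at h3
    rw [← h3] at h2
    simpa using h2.symm
  have hsumΓ : ∀ᵐ ω : Ω, ∑ j, ‖Γ ω j‖ ^ 2 = 1 := by
    filter_upwards [hΓ] with ω h
    exact hnorm1 (Γ ω) h
  have hbd : ∀ᵐ ω : Ω, ∀ j, ‖Γ ω j‖ ≤ 1 := by
    filter_upwards [hsumΓ] with ω h
    intro j
    have h1 : ‖Γ ω j‖ ^ 2 ≤ 1 := by
      rw [← h]
      exact Finset.single_le_sum (f := fun j => ‖Γ ω j‖ ^ 2)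
        (fun i _ => by positivity) (Finset.mem_univ j)
    nlinarith [norm_nonneg (Γ ω j)]
  have hint : ∀ j k : Fin N, Integrable (fun ω => Γ ω j * conj (Γ ω k)) ℙ := by
    intro j k
    refine Integrable.mono' (integrable_const 1)
      ((hm j).mul (hmc k)).aestronglyMeasurable ?_
    filter_upwards [hbd] with ω h
    rw [norm_mul, RCLike.norm_conj]
    calc ‖Γ ω j‖ * ‖Γ ω k‖ ≤ 1 * 1 :=
          mul_le_mul (h j) (h k) (norm_nonneg _) zero_le_one
      _ = 1 := one_mul 1
  have hKH : K.IsHermitian := by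
    rw [hK]
    ext j k
    simp only [Matrix.conjTranspose_apply, Matrix.of_apply, Complex.star_def]
    rw [← integral_conj]
    congr 1
    funext ω
    simp only [_root_.map_mul, Complex.conj_conj]
    ring
  have hintc : ∀ (c : ℂ) (j k : Fin N),
      Integrable (fun ω => c * (conj (Γ ω j) * Γ ω k)) ℙ := by
    intro c j k
    have h1 : (fun ω => c * (conj (Γ ω j) * Γ ω k))
        = fun ω => c * (Γ ω k * conj (Γ ω j)) := by funext ω; ring
    rw [h1]
    exact (hint k j).const_mul c
  have hKe : ∀ j k : Fin N, ∫ ω, (conj (Γ ω j) * Γ ω k) = K k j := by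
    intro j k
    simp only [hK, Matrix.of_apply]
    congr 1
    funext ω
    ring
  have hf2 : ∀ v : EuclideanSpace ℂ (Fin N), ‖v‖ = 1 →
      f v = 2 - 2 * (star (fun j => v j) ⬝ᵥ K *ᵥ (fun j => v j)).re := by
    intro v hv
    have hv1 : ∑ j, ‖v j‖ ^ 2 = 1 := hnorm1 v hv
    set z : Ω → ℂ := fun ω => ∑ j, v j * conj (Γ ω j) with hzdef
    have hzm : Measurable z := by
      apply Finset.measurable_sum
      intro j _
      exact measurable_const.mul (hmc j)
    have hae : (fun ω => ∑ j, ∑ k, ‖v j * conj (v k) - Γ ω j * conj (Γ ω k)‖ ^ 2)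
        =ᵐ[ℙ] fun ω => 2 - 2 * ‖z ω‖ ^ 2 := by
      filter_upwards [hsumΓ] with ω h
      exact pointwise_expand (fun j => v j) (fun j => Γ ω j) hv1 h
    have hzb : ∀ᵐ ω : Ω, ‖(‖z ω‖ ^ 2)‖ ≤ (∑ j, ‖v j‖) ^ 2 := by
      filter_upwards [hbd] with ω h
      have h1 : ‖z ω‖ ≤ ∑ j, ‖v j‖ := by
        refine le_trans (norm_sum_le _ _) (Finset.sum_le_sum fun j _ => ?_)
        rw [norm_mul, RCLike.norm_conj]
        calc ‖v j‖ * ‖Γ ω j‖ ≤ ‖v j‖ * 1 :=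
              mul_le_mul_of_nonneg_left (h j) (norm_nonneg _)
          _ = ‖v j‖ := mul_one _
      rw [Real.norm_eq_abs, abs_of_nonneg (by positivity)]
      exact pow_le_pow_left₀ (norm_nonneg _) h1 2
    have hzint : Integrable (fun ω => ‖z ω‖ ^ 2) ℙ :=
      Integrable.mono' (integrable_const _) (hzm.norm.pow_const 2).aestronglyMeasurable hzb
    have hCz : ∫ ω, (z ω * conj (z ω)) = star (fun j => v j) ⬝ᵥ K *ᵥ (fun j => v j) := by
      have hptz : ∀ ω, z ω * conj (z ω)
          = ∑ j, ∑ k, (v j * conj (v k)) * (conj (Γ ω j) * Γ ω k) := by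
        intro ω
        rw [hzdef]
        simp only [map_sum, Finset.sum_mul_sum]
        refine Finset.sum_congr rfl fun j _ => Finset.sum_congr rfl fun k _ => ?_
        simp only [_root_.map_mul, Complex.conj_conj]
        ring
      simp only [hptz]
      rw [integral_finset_sum _ fun j _ => integrable_finset_sum _ fun k _ => hintc _ j k]
      have hstep : ∀ j : Fin N, (∫ ω, ∑ k, (v j * conj (v k)) * (conj (Γ ω j) * Γ ω k))
          = ∑ k, (v j * conj (v k)) * K k j := by
        intro j
        rw [integral_finset_sum _ fun k _ => hintc _ j k]
        refine Finset.sum_congr rfl fun k _ => ?_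
        rw [MeasureTheory.integral_const_mul, hKe j k]
      simp only [hstep]
      simp only [dotProduct, Pi.star_apply, mulVec, Finset.mul_sum]
      conv_rhs => rw [Finset.sum_comm]
      refine Finset.sum_congr rfl fun j _ => Finset.sum_congr rfl fun k _ => ?_
      rw [show star (v k) = conj (v k) from rfl]
      ring
    have hreal : ∫ ω, ‖z ω‖ ^ 2
        = (star (fun j => v j) ⬝ᵥ K *ᵥ (fun j => v j)).re := by
      have h1 : ((∫ ω, ‖z ω‖ ^ 2 : ℝ) : ℂ) = ∫ ω, ((‖z ω‖ ^ 2 : ℝ) : ℂ) :=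
        integral_ofReal.symm
      have h2 : (fun ω => ((‖z ω‖ ^ 2 : ℝ) : ℂ)) = fun ω => z ω * conj (z ω) := by
        funext ω; rw [mul_conj'']
      rw [h2, hCz] at h1
      have h3 := congrArg Complex.re h1
      simpa using h3
    rw [hf]
    show (∫ ω, ∑ j, ∑ k, ‖v j * conj (v k) - Γ ω j * conj (Γ ω k)‖ ^ 2) = _
    rw [integral_congr_ae hae,
      integral_sub (integrable_const 2) (hzint.const_mul 2),
      MeasureTheory.integral_const_mul, hreal, integral_const]
    simp
  have hu1 : ∑ j, ‖u j‖ ^ 2 = 1 := hnorm1 u hu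
  constructor
  · intro H
    apply (rayleigh_iff hKH (fun j => u j) hu1).mp
    intro v hv
    set vE : EuclideanSpace ℂ (Fin N) := (WithLp.equiv 2 (Fin N → ℂ)).symm v with hvE
    have hvE1 : ‖vE‖ = 1 := by
      rw [EuclideanSpace.norm_eq]
      have h4 : ∑ i, ‖vE i‖ ^ 2 = ∑ i, ‖v i‖ ^ 2 := rfl
      rw [h4, hv, Real.sqrt_one]
    have h1 := H vE hvE1
    rw [hf2 u hu, hf2 vE hvE1] at h1
    have h2 : (fun j => vE j) = v := rfl
    rw [h2] at h1
    linarith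
  · intro H v hv
    rw [hf2 u hu, hf2 v hv]
    have h3 := (rayleigh_iff hKH (fun j => u j) hu1).mpr H (fun j => v j) (hnorm1 v hv)
    linarith
end

section
/- Let A be a real symmetric N×N matrix whose largest eigenvalue η is simple, with unit eigenvector v. Then v vᵀ is the unique nearest point of A in the set { u uᵀ : u ∈ ℝ^N, ‖u‖ = 1 } with respect to the Frobenius norm; equivalently, a unit vector u minimizes ‖A − u uᵀ‖_F if and only if u = v or u = −v. -/
open scoped RealInnerProductSpace

/-- Inclusion of plain vectors into Euclidean space. -/
noncomputable def nearestRankOne.toE {N : ℕ} (w : Fin N → ℝ) : EuclideanSpace ℝ (Fin N) :=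
  (WithLp.equiv 2 (Fin N → ℝ)).symm w

open nearestRankOne in
/-- Rayleigh bound and its equality case for a symmetric matrix. -/
lemma nearestRankOne.rayleigh_aux {N : ℕ} (A : Matrix (Fin N) (Fin N) ℝ) (hH : A.IsHermitian)
    (η : ℝ) (hlam : ∀ i, hH.eigenvalues i ≤ η)
    (u : EuclideanSpace ℝ (Fin N)) (hu : ‖u‖ = 1) :
    (∑ j, ∑ k, A j k * (u j * u k)) ≤ η ∧
    ((∑ j, ∑ k, A j k * (u j * u k)) = η →
      A.mulVec (fun j => u j) = η • fun j => u j) := by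
  set e := hH.eigenvectorBasis with he
  set lam := hH.eigenvalues with hlm
  set c : Fin N → ℝ := fun i => ⟪e i, u⟫ with hc
  have heig : ∀ i, toE (A.mulVec (fun j => e i j)) = lam i • e i := by
    intro i; ext j; exact congrFun (hH.mulVec_eigenvectorBasis i) j
  have hsym : ∀ x y : EuclideanSpace ℝ (Fin N),
      ⟪toE (A.mulVec (fun j => x j)), y⟫ = ⟪x, toE (A.mulVec (fun j => y j))⟫ := by
    intro x y
    have h := (Matrix.isHermitian_iff_isSymmetric.1 hH) x y
    simpa [Matrix.toEuclideanLin_apply, toE] using h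
  have hinner : ∀ w : EuclideanSpace ℝ (Fin N),
      ⟪w, toE (A.mulVec (fun j => w j))⟫ = ∑ j, ∑ k, A j k * (w j * w k) := by
    intro w
    simp only [PiLp.inner_apply, toE, WithLp.equiv_symm_apply, WithLp.ofLp_toLp, Matrix.mulVec,
      dotProduct, RCLike.inner_apply, starRingEnd_apply, star_trivial, Finset.mul_sum, Finset.sum_mul]
    exact Finset.sum_congr rfl fun j _ => Finset.sum_congr rfl fun k _ => by ring
  have hQ : ∑ j, ∑ k, A j k * (u j * u k) = ∑ i, lam i * c i ^ 2 := by
    rw [← hinner u, ← OrthonormalBasis.sum_inner_mul_inner e u (toE (A.mulVec (fun j => u j)))]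
    refine Finset.sum_congr rfl fun i _ => ?_
    have h1 : ⟪e i, toE (A.mulVec (fun j => u j))⟫ = lam i * c i := by
      rw [← hsym (e i) u, heig i, real_inner_smul_left]
    have h2 : (⟪u, e i⟫ : ℝ) = c i := real_inner_comm (e i) u
    rw [h1, h2]; ring
  have hsum : ∑ i, c i ^ 2 = 1 := by
    have h := OrthonormalBasis.sum_inner_mul_inner e u u
    have h2 : ⟪u, u⟫ = 1 := by
      rw [real_inner_self_eq_norm_sq, hu]; norm_num
    calc ∑ i, c i ^ 2 = ∑ i, ⟪u, e i⟫ * ⟪e i, u⟫ := by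
          refine Finset.sum_congr rfl fun i _ => ?_
          have h2 : (⟪u, e i⟫ : ℝ) = c i := real_inner_comm (e i) u
          rw [h2]; ring
      _ = 1 := by rw [h, h2]
  constructor
  · rw [hQ]
    calc ∑ i, lam i * c i ^ 2 ≤ ∑ i, η * c i ^ 2 :=
          Finset.sum_le_sum fun i _ => mul_le_mul_of_nonneg_right (hlam i) (sq_nonneg _)
      _ = η := by rw [← Finset.mul_sum, hsum, mul_one]
  · intro heq
    rw [hQ] at heq
    have hzero : ∑ i, (η - lam i) * c i ^ 2 = 0 := by
      simp only [sub_mul, Finset.sum_sub_distrib, heq, ← Finset.mul_sum, hsum, mul_one, sub_self]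
    have hterm : ∀ i ∈ Finset.univ, (η - lam i) * c i ^ 2 = 0 :=
      (Finset.sum_eq_zero_iff_of_nonneg fun i _ =>
        mul_nonneg (sub_nonneg.2 (hlam i)) (sq_nonneg _)).1 hzero
    have hkey : ∀ i, lam i * c i = η * c i := by
      intro i
      rcases mul_eq_zero.1 (hterm i (Finset.mem_univ i)) with h | h
      · rw [sub_eq_zero] at h; rw [h]
      · rw [pow_eq_zero_iff (by norm_num)] at h; rw [h]; ring
    have hrepr : ∑ i, c i • e i = u := e.sum_repr' u
    have hufun : (fun j => u j) = ∑ i, c i • (fun j => e i j) := by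
      funext j
      have := congrFun (congrArg (fun (z : EuclideanSpace ℝ (Fin N)) => (z : Fin N → ℝ)) hrepr) j
      simp only [← this, WithLp.ofLp_sum, WithLp.ofLp_smul, Finset.sum_apply, Pi.smul_apply]
    calc A.mulVec (fun j => u j) = ∑ i, c i • A.mulVec (fun j => e i j) := by
          rw [hufun, ← Matrix.mulVecLin_apply, map_sum]
          simp [Matrix.mulVecLin_apply]
      _ = ∑ i, (lam i * c i) • (fun j => e i j) := by
          refine Finset.sum_congr rfl fun i _ => ?_
          have heig' : A.mulVec (fun j => e i j) = lam i • fun j => e i j :=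
            hH.mulVec_eigenvectorBasis i
          rw [heig', smul_smul, mul_comm]
      _ = η • fun j => u j := by
          rw [hufun]
          simp only [Finset.smul_sum]
          refine Finset.sum_congr rfl fun i _ => ?_
          rw [hkey i, smul_smul]

/-- Let `A` be a real symmetric `N×N` matrix whose largest eigenvalue
`η` is simple, with unit eigenvector `v`.  Then `v vᵀ` is the unique nearest point of
`A` in `{u uᵀ : ‖u‖ = 1}` for the Frobenius norm: a unit vector `u` minimizes
`‖A − u uᵀ‖_F` iff `u = v` or `u = -v`. -/
theorem nearest_rank_one_projection
    {N : ℕ} (A : Matrix (Fin N) (Fin N) ℝ) (hA : A.IsSymm)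
    (η : ℝ) (v : EuclideanSpace ℝ (Fin N)) (hv : ‖v‖ = 1)
    (hev : A.mulVec (fun j => v j) = η • (fun j => v j))
    (htop : ∀ ξ : ℝ, (∃ w : Fin N → ℝ, w ≠ 0 ∧ A.mulVec w = ξ • w) → ξ ≤ η)
    (hsimple : ∀ w : Fin N → ℝ, A.mulVec w = η • w → ∃ c : ℝ, w = c • (fun j => v j)) :
    (∀ u : EuclideanSpace ℝ (Fin N), ‖u‖ = 1 →
        Real.sqrt (∑ j : Fin N, ∑ k : Fin N, (A j k - v j * v k) ^ 2) ≤
          Real.sqrt (∑ j : Fin N, ∑ k : Fin N, (A j k - u j * u k) ^ 2)) ∧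
      ∀ u : EuclideanSpace ℝ (Fin N), ‖u‖ = 1 →
        ((∀ w : EuclideanSpace ℝ (Fin N), ‖w‖ = 1 →
            Real.sqrt (∑ j : Fin N, ∑ k : Fin N, (A j k - u j * u k) ^ 2) ≤
              Real.sqrt (∑ j : Fin N, ∑ k : Fin N, (A j k - w j * w k) ^ 2)) ↔
          (u = v ∨ u = -v)) := by
  have hH : A.IsHermitian := by
    ext i j; simpa using congrFun (congrFun hA i) j
  have hlam : ∀ i, hH.eigenvalues i ≤ η := by
    intro i
    refine htop _ ⟨(fun j => hH.eigenvectorBasis i j), ?_, hH.mulVec_eigenvectorBasis i⟩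
    intro h0
    have h1 : hH.eigenvectorBasis i = 0 := by ext j; exact congrFun h0 j
    have hn := hH.eigenvectorBasis.orthonormal.1 i
    rw [h1] at hn; simp at hn
  have hnorm2 : ∀ u : EuclideanSpace ℝ (Fin N), ‖u‖ = 1 → ∑ j, u j ^ 2 = 1 := by
    intro u hu
    have h := congrArg (· ^ 2) hu
    simpa [EuclideanSpace.norm_eq, Real.sq_sqrt,
      Finset.sum_nonneg (fun i _ => sq_nonneg (u i)), sq_abs] using h
  have hFnn : ∀ u : EuclideanSpace ℝ (Fin N),
      (0:ℝ) ≤ ∑ j, ∑ k, (A j k - u j * u k) ^ 2 := fun u =>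
    Finset.sum_nonneg fun j _ => Finset.sum_nonneg fun k _ => sq_nonneg _
  have hF : ∀ u : EuclideanSpace ℝ (Fin N), ‖u‖ = 1 →
      ∑ j, ∑ k, (A j k - u j * u k) ^ 2 =
        (∑ j, ∑ k, (A j k) ^ 2) - 2 * (∑ j, ∑ k, A j k * (u j * u k)) + 1 := by
    intro u hu
    have h1 : (∑ j, u j ^ 2) * (∑ k, u k ^ 2) = ∑ j, ∑ k, u j ^ 2 * u k ^ 2 :=
      Finset.sum_mul_sum _ _ _ _
    calc ∑ j, ∑ k, (A j k - u j * u k) ^ 2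
        = ∑ j, ∑ k, ((A j k) ^ 2 - 2 * (A j k * (u j * u k)) + u j ^ 2 * u k ^ 2) :=
          Finset.sum_congr rfl fun j _ => Finset.sum_congr rfl fun k _ => by ring
      _ = (∑ j, ∑ k, (A j k) ^ 2) - 2 * (∑ j, ∑ k, A j k * (u j * u k)) + 1 := by
          simp only [Finset.sum_add_distrib, Finset.sum_sub_distrib, ← Finset.mul_sum,
            ← h1, hnorm2 u hu, mul_one]
  have hQv : ∑ j, ∑ k, A j k * (v j * v k) = η := by
    have hrow : ∀ j, ∑ k, A j k * v k = η * v j := by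
      intro j
      have h := congrFun hev j
      simpa [Matrix.mulVec, dotProduct] using h
    calc ∑ j, ∑ k, A j k * (v j * v k) = ∑ j, v j * ∑ k, A j k * v k := by
          refine Finset.sum_congr rfl fun j _ => ?_
          rw [Finset.mul_sum]
          exact Finset.sum_congr rfl fun k _ => by ring
      _ = ∑ j, v j * (η * v j) := by simp only [hrow]
      _ = η * ∑ j, v j ^ 2 := by
          rw [Finset.mul_sum]
          exact Finset.sum_congr rfl fun j _ => by ring
      _ = η := by rw [hnorm2 v hv, mul_one]
  have hmin : ∀ u : EuclideanSpace ℝ (Fin N), ‖u‖ = 1 →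
      Real.sqrt (∑ j, ∑ k, (A j k - v j * v k) ^ 2) ≤
        Real.sqrt (∑ j, ∑ k, (A j k - u j * u k) ^ 2) := by
    intro u hu
    apply Real.sqrt_le_sqrt
    rw [hF v hv, hF u hu, hQv]
    have := (nearestRankOne.rayleigh_aux A hH η hlam u hu).1
    linarith
  refine ⟨hmin, ?_⟩
  intro u hu
  constructor
  · intro hminu
    have hle : ∑ j, ∑ k, (A j k - u j * u k) ^ 2 ≤ ∑ j, ∑ k, (A j k - v j * v k) ^ 2 :=
      (Real.sqrt_le_sqrt_iff (hFnn v)).1 (hminu v hv)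
    rw [hF v hv, hF u hu, hQv] at hle
    have hub := (nearestRankOne.rayleigh_aux A hH η hlam u hu).1
    have hQu : ∑ j, ∑ k, A j k * (u j * u k) = η := le_antisymm hub (by linarith)
    have heig := (nearestRankOne.rayleigh_aux A hH η hlam u hu).2 hQu
    obtain ⟨c, hc⟩ := hsimple _ heig
    have hcu : u = c • v := by ext j; exact congrFun hc j
    have habs : |c| = 1 := by
      rw [hcu, norm_smul, hv, mul_one, Real.norm_eq_abs] at hu
      exact hu
    rcases (abs_eq (by norm_num : (0:ℝ) ≤ 1)).1 habs with h | h
    · left; rw [hcu, h, one_smul]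
    · right; rw [hcu, h, neg_smul, one_smul]
  · intro h w hw
    have hFu : ∑ j, ∑ k, (A j k - u j * u k) ^ 2 =
        (∑ j, ∑ k, (A j k) ^ 2) - 2 * η + 1 := by
      rcases h with h | h
      · rw [h, hF v hv, hQv]
      · rw [h]
        have hnv : ‖(-v : EuclideanSpace ℝ (Fin N))‖ = 1 := by rw [norm_neg]; exact hv
        rw [hF (-v) hnv]
        have hQnv : ∑ j, ∑ k, A j k * ((-v) j * (-v) k) = η := by
          rw [← hQv]
          refine Finset.sum_congr rfl fun j _ => Finset.sum_congr rfl fun k _ => ?_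
          have h1 : (-v : EuclideanSpace ℝ (Fin N)) j = -(v j) := rfl
          have h2 : (-v : EuclideanSpace ℝ (Fin N)) k = -(v k) := rfl
          rw [h1, h2]; ring
        rw [hQnv]
    apply Real.sqrt_le_sqrt
    rw [hFu, hF w hw]
    have := (nearestRankOne.rayleigh_aux A hH η hlam w hw).1
    linarith
end
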